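/- Let A1 be anti-stable and A2 stable. If the output z(t) = D1·x1(t) + D2·x2(t) of the system x1(t+1) = A1·x1(t), x2(t+1) = A2·x2(t) + A3·x1(t) converges to 0 for all initial states x1(0), x2(0), then there exists a (unique) matrix T with T·A1 − A2·T = A3 and D1 + D2·T = 0. -/

import Mathlib

open Matrix Filter

def IsStable {n : Type*} [Fintype n] [DecidableEq n] (M : Matrix n n ℝ) : Prop :=
  ∀ μ ∈ spectrum ℂ (M.map (algebraMap ℝ ℂ)), ‖μ‖ < 1

def IsAntiStable {n : Type*} [Fintype n] [DecidableEq n] (M : Matrix n n ℝ) : Prop :=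
  ∀ μ ∈ spectrum ℂ (M.map (algebraMap ℝ ℂ)), 1 ≤ ‖μ‖

open Polynomial in
lemma mem_spectrum_of_eval_charpoly {m : ℕ} (M : Matrix (Fin m) (Fin m) ℂ) (μ : ℂ)
    (h : M.charpoly.eval μ = 0) : μ ∈ spectrum ℂ M := by
  rw [spectrum.mem_iff]
  rw [Matrix.isUnit_iff_isUnit_det, isUnit_iff_ne_zero, ne_eq, not_not]
  rw [Matrix.charpoly, ← coe_evalRingHom, RingHom.map_det] at h
  convert h using 2
  rw [charmatrix]
  ext i j
  by_cases hij : i = j <;>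
  simp [Matrix.map_apply, Algebra.algebraMap_eq_smul_one, Matrix.one_apply,
    Matrix.diagonal_apply, hij, Matrix.sub_apply]

open Polynomial in
lemma isUnit_aeval_of_roots {m : ℕ} (A : Matrix (Fin m) (Fin m) ℂ) (q : ℂ[X]) (hq : q.Monic)
    (hroots : ∀ r ∈ q.roots, r ∉ spectrum ℂ A) :
    IsUnit (aeval A q) := by
  have key : ∀ s : Multiset ℂ, (∀ r ∈ s, r ∉ spectrum ℂ A) →
      IsUnit (aeval A (s.map fun r => X - C r).prod) := by
    intro s
    induction s using Multiset.induction with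
    | empty => simp
    | cons r s ih =>
      intro hs
      have hr : r ∉ spectrum ℂ A := hs r (Multiset.mem_cons_self r s)
      rw [Multiset.map_cons, Multiset.prod_cons, _root_.map_mul]
      refine IsUnit.mul ?_ (ih fun u hu => hs u (Multiset.mem_cons_of_mem hu))
      simp only [map_sub, aeval_X, aeval_C]
      rw [spectrum.mem_iff, not_not] at hr
      simpa [neg_sub] using hr.neg
  have hsplit := IsAlgClosed.splits q
  have hfac : q = (q.roots.map fun r => X - C r).prod :=
    (hsplit.eq_prod_roots_of_monic hq)
  rw [hfac]
  exact key q.roots hroots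

open Polynomial in
lemma sylvester_inj {n1 n2 : ℕ} (A1 : Matrix (Fin n1) (Fin n1) ℝ)
    (A2 : Matrix (Fin n2) (Fin n2) ℝ) (hA1 : IsAntiStable A1) (hA2 : IsStable A2)
    (T : Matrix (Fin n2) (Fin n1) ℝ) (hT : T * A1 = A2 * T) : T = 0 := by
  set A1c := A1.map (algebraMap ℝ ℂ) with hA1c
  set A2c := A2.map (algebraMap ℝ ℂ) with hA2c
  set Tc := T.map (algebraMap ℝ ℂ) with hTc
  have hTc1 : Tc * A1c = A2c * Tc := by
    rw [hTc, hA1c, hA2c, ← Matrix.map_mul, ← Matrix.map_mul, hT]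
  have hcomm : ∀ k : ℕ, Tc * A1c ^ k = A2c ^ k * Tc := by
    intro k
    induction k with
    | zero => simp
    | succ k ih =>
      rw [pow_succ, pow_succ, ← Matrix.mul_assoc, ih, Matrix.mul_assoc, hTc1,
        ← Matrix.mul_assoc]
  have hpoly : ∀ q : ℂ[X], Tc * (aeval A1c q) = (aeval A2c q) * Tc := by
    intro q
    induction q using Polynomial.induction_on' with
    | add a b ha hb => rw [map_add, map_add, Matrix.mul_add, Matrix.add_mul, ha, hb]
    | monomial k a =>
      simp only [aeval_monomial, Algebra.algebraMap_eq_smul_one, Matrix.smul_mul,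
        one_mul, Matrix.mul_smul, hcomm]
  have hq0 : Tc * (aeval A1c A2c.charpoly) = 0 := by
    rw [hpoly, Matrix.aeval_self_charpoly, Matrix.zero_mul]
  have hunit : IsUnit (aeval A1c A2c.charpoly) := by
    refine isUnit_aeval_of_roots _ _ (Matrix.charpoly_monic _) fun r hr hrs => ?_
    have hroot : A2c.charpoly.eval r = 0 := by
      exact (Polynomial.mem_roots (Matrix.charpoly_monic A2c).ne_zero).mp hr
    have h2 : r ∈ spectrum ℂ A2c := mem_spectrum_of_eval_charpoly _ _ hroot
    have hlt : ‖r‖ < 1 := hA2 r h2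
    have hge : 1 ≤ ‖r‖ := hA1 r hrs
    linarith
  have hTc0 : Tc = 0 := by
    calc Tc = Tc * (aeval A1c A2c.charpoly) * (↑hunit.unit⁻¹ : Matrix (Fin n1) (Fin n1) ℂ) := by
          rw [Matrix.mul_assoc, IsUnit.mul_val_inv, Matrix.mul_one]
      _ = 0 := by rw [hq0, Matrix.zero_mul]
  ext i j
  have h2 : ((T i j : ℝ) : ℂ) = 0 := by
    have := congrFun (congrFun hTc0 i) j
    rw [hTc] at this
    simpa [Matrix.map_apply] using this
  exact_mod_cast h2

lemma keyA {n p : ℕ} (A : Matrix (Fin n) (Fin n) ℝ) (M : Matrix (Fin p) (Fin n) ℝ)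
    (hA : IsAntiStable A)
    (h : ∀ x0 : Fin n → ℝ, Tendsto (fun t => M.mulVec ((A ^ t).mulVec x0)) atTop (nhds 0)) :
    M = 0 := by
  -- matrix-level convergence over ℝ
  have hmat : ∀ i j, Tendsto (fun t => ((M * A ^ t : Matrix (Fin p) (Fin n) ℝ)) i j) atTop (nhds 0) := by
    intro i j
    have := (h (Pi.single j 1))
    rw [tendsto_pi_nhds] at this
    have hi := this i
    simp only [mulVec_mulVec] at hi
    simpa [mulVec_single] using hi
  set Ac := A.map (algebraMap ℝ ℂ) with hAc
  set Mc := M.map (algebraMap ℝ ℂ) with hMc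
  have hpow : ∀ t, (Ac ^ t) = (A ^ t).map (algebraMap ℝ ℂ) := by
    intro t
    rw [hAc]
    exact (map_pow ((algebraMap ℝ ℂ).mapMatrix) A t).symm
  -- complex matrix-level convergence
  have hmatC : ∀ i j, Tendsto (fun t => (Mc * Ac ^ t : Matrix (Fin p) (Fin n) ℂ) i j)
      atTop (nhds 0) := by
    intro i j
    have : ∀ t, (Mc * Ac ^ t : Matrix (Fin p) (Fin n) ℂ) i j
        = ((M * A ^ t : Matrix (Fin p) (Fin n) ℝ) i j : ℂ) := by
      intro t
      rw [hpow, hMc, ← Matrix.map_mul]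
      rfl
    simp only [this]
    have := (Complex.continuous_ofReal.tendsto 0).comp (hmat i j)
    simpa [Function.comp_def] using this
  -- vector-level complex convergence
  have hvecC : ∀ v : Fin n → ℂ, Tendsto (fun t => (Mc * Ac ^ t : Matrix (Fin p) (Fin n) ℂ).mulVec v)
      atTop (nhds 0) := by
    intro v
    rw [tendsto_pi_nhds]
    intro i
    have : ∀ t, (Mc * Ac ^ t : Matrix (Fin p) (Fin n) ℂ).mulVec v i
        = ∑ j, (Mc * Ac ^ t : Matrix (Fin p) (Fin n) ℂ) i j * v j := fun t => rfl
    simp only [this]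
    have : Tendsto (fun t => ∑ j, (Mc * Ac ^ t : Matrix (Fin p) (Fin n) ℂ) i j * v j)
        atTop (nhds (∑ j : Fin n, 0 * v j)) :=
      tendsto_finset_sum _ (fun j _ => (hmatC i j).mul_const (v j))
    simpa using this
  -- endomorphism setup
  set f : Module.End ℂ (Fin n → ℂ) := Matrix.toLinAlgEquiv' Ac with hf
  set g : (Fin n → ℂ) →ₗ[ℂ] (Fin p → ℂ) := Matrix.toLin' Mc with hg
  have hfg : ∀ (v : Fin n → ℂ) (t : ℕ),
      g ((f ^ t) v) = (Mc * Ac ^ t : Matrix (Fin p) (Fin n) ℂ).mulVec v := by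
    intro v t
    have hft : (f ^ t) v = (Ac ^ t).mulVec v := by
      rw [hf, ← map_pow]
      rfl
    rw [hft, hg, Matrix.toLin'_apply, mulVec_mulVec]
  have hgv : ∀ v : Fin n → ℂ, Tendsto (fun t => g ((f ^ t) v)) atTop (nhds 0) := by
    intro v
    simp only [hfg]
    exact hvecC v
  -- spectrum transfer
  have hspec : ∀ μ : ℂ, f.HasEigenvalue μ → 1 ≤ ‖μ‖ := by
    intro μ hμ
    have h1 : μ ∈ spectrum ℂ f := hμ.mem_spectrum
    rw [hf] at h1
    rw [AlgEquiv.spectrum_eq (Matrix.toLinAlgEquiv') Ac] at h1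
    exact hA μ h1
  -- the key induction
  have claim : ∀ (k : ℕ) (μ : ℂ) (v : Fin n → ℂ),
      ((f - μ • 1) ^ k) v = 0 → g v = 0 := by
    intro k
    induction k with
    | zero => intro μ v hv; simpa using congrArg g hv
    | succ k ih =>
      intro μ v hv
      by_cases hv0 : v = 0
      · simp [hv0]
      set N : Module.End ℂ (Fin n → ℂ) := f - μ • 1 with hNdef
      -- μ is an eigenvalue
      have hev : f.HasEigenvalue μ := by
        refine Module.End.hasEigenvalue_of_hasGenEigenvalue (k := k + 1) ?_
        refine (Submodule.ne_bot_iff _).mpr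
          ⟨v, Module.End.mem_genEigenspace_nat.mpr (LinearMap.mem_ker.mpr hv), hv0⟩
      have hnorm : 1 ≤ ‖μ‖ := hspec μ hev
      -- higher powers are killed by g
      have hNk : ∀ j, 1 ≤ j → g ((N ^ j) v) = 0 := by
        intro j hj
        obtain ⟨j', rfl⟩ := Nat.exists_eq_add_of_le hj
        apply ih μ
        have : ((f - μ • 1) ^ k) ((N ^ (1 + j')) v) = (N ^ j') ((N ^ (k + 1)) v) := by
          rw [← hNdef, ← Module.End.mul_apply, ← Module.End.mul_apply, ← pow_add, ← pow_add]
          ring_nf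
        rw [this, hv, map_zero]
      -- binomial expansion
      have hexp : ∀ t : ℕ, g ((f ^ t) v) = μ ^ t • g v := by
        intro t
        have hcomm : Commute N (μ • (1 : Module.End ℂ (Fin n → ℂ))) :=
          (Commute.one_right N).smul_right μ
        have hfN : f = N + μ • 1 := by rw [hNdef]; abel
        rw [hfN, hcomm.add_pow]
        rw [LinearMap.coe_sum, Finset.sum_apply, map_sum]
        rw [Finset.sum_eq_single 0]
        · have : ((N ^ 0 * (μ • 1) ^ (t - 0) * (t.choose 0 : Module.End ℂ (Fin n → ℂ)) :
              Module.End ℂ (Fin n → ℂ))) v = μ ^ t • v := by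
            simp [_root_.smul_pow]
          rw [this, _root_.map_smul]
        · intro j hj hj0
          have h1j : 1 ≤ j := Nat.one_le_iff_ne_zero.mpr hj0
          have : ((N ^ j * (μ • 1) ^ (t - j) * (t.choose j : Module.End ℂ (Fin n → ℂ)) :
              Module.End ℂ (Fin n → ℂ))) v
              = (t.choose j : ℂ) • μ ^ (t - j) • (N ^ j) v := by
            simp only [Module.End.mul_apply, _root_.smul_pow, one_pow, LinearMap.smul_apply,
              Module.End.one_apply, Module.End.natCast_apply, ← Nat.cast_smul_eq_nsmul (R := ℂ),
              LinearMap.map_smul_of_tower]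
          rw [this, _root_.map_smul, _root_.map_smul, hNk j h1j, smul_zero, smul_zero]
        · intro h0; simp at h0
      -- convergence kills g v
      have htend : Tendsto (fun t => μ ^ t • g v) atTop (nhds 0) := by
        simpa only [hexp] using hgv v
      by_contra hgv0
      obtain ⟨i, hi⟩ : ∃ i, g v i ≠ 0 := by
        by_contra hc
        push_neg at hc
        exact hgv0 (funext hc)
      have hcomp : Tendsto (fun t => μ ^ t * g v i) atTop (nhds 0) := by
        have := (tendsto_pi_nhds.mp htend) i
        simpa using this
      have hnorm2 : Tendsto (fun t => ‖μ ^ t * g v i‖) atTop (nhds 0) := by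
        simpa using hcomp.norm
      obtain ⟨t, ht⟩ := (hnorm2.eventually_lt_const (norm_pos_iff.mpr hi)).exists
      rw [norm_mul, norm_pow] at ht
      have h1 : (1:ℝ) * ‖g v i‖ ≤ ‖μ‖ ^ t * ‖g v i‖ :=
        mul_le_mul_of_nonneg_right (one_le_pow₀ hnorm) (norm_nonneg _)
      rw [one_mul] at h1
      exact absurd (lt_of_le_of_lt h1 ht) (lt_irrefl _)
  -- conclude
  have hgzero : ∀ v : Fin n → ℂ, g v = 0 := by
    intro v
    have htop := Module.End.iSup_maxGenEigenspace_eq_top f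
    have hv : v ∈ (⊤ : Submodule ℂ (Fin n → ℂ)) := Submodule.mem_top
    rw [← htop] at hv
    refine Submodule.iSup_induction _ (motive := fun w => g w = 0) hv ?_ (map_zero g) ?_
    · intro μ w hw
      obtain ⟨k, hk⟩ := (Module.End.mem_maxGenEigenspace f μ w).mp hw
      exact claim k μ w hk
    · intro w₁ w₂ h1 h2
      rw [map_add, h1, h2, add_zero]
  -- back to real matrices
  have hMc0 : Mc = 0 := by
    ext i j
    have := congrFun (hgzero (Pi.single j 1)) i
    rw [hg, Matrix.toLin'_apply] at this
    simpa [mulVec_single] using this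
  ext i j
  have h2 : ((M i j : ℝ) : ℂ) = 0 := by
    have := congrFun (congrFun hMc0 i) j
    rw [hMc] at this
    simpa [Matrix.map_apply] using this
  exact_mod_cast h2


theorem stmt3 {n1 n2 p : ℕ}
    (A1 : Matrix (Fin n1) (Fin n1) ℝ) (A2 : Matrix (Fin n2) (Fin n2) ℝ)
    (A3 : Matrix (Fin n2) (Fin n1) ℝ)
    (D1 : Matrix (Fin p) (Fin n1) ℝ) (D2 : Matrix (Fin p) (Fin n2) ℝ)
    (hA1 : IsAntiStable A1) (hA2 : IsStable A2)
    (hreg : ∀ x1 : ℕ → Fin n1 → ℝ, ∀ x2 : ℕ → Fin n2 → ℝ,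
      (∀ t, x1 (t + 1) = A1.mulVec (x1 t)) →
      (∀ t, x2 (t + 1) = A2.mulVec (x2 t) + A3.mulVec (x1 t)) →
      Tendsto (fun t => D1.mulVec (x1 t) + D2.mulVec (x2 t)) atTop (nhds 0)) :
    ∃! T : Matrix (Fin n2) (Fin n1) ℝ, T * A1 - A2 * T = A3 ∧ D1 + D2 * T = 0 := by
  classical
  let L : Matrix (Fin n2) (Fin n1) ℝ →ₗ[ℝ] Matrix (Fin n2) (Fin n1) ℝ :=
    { toFun := fun T => T * A1 - A2 * T
      map_add' := by
        intro S T
        simp only [Matrix.add_mul, Matrix.mul_add]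
        abel
      map_smul' := by
        intro c T
        simp only [Matrix.smul_mul, Matrix.mul_smul, smul_sub, RingHom.id_apply] }
  have hinj : Function.Injective L := by
    intro T1 T2 h12
    have h0 : L (T1 - T2) = 0 := by rw [map_sub, h12, sub_self]
    have heq : (T1 - T2) * A1 = A2 * (T1 - T2) := by
      have : (T1 - T2) * A1 - A2 * (T1 - T2) = 0 := h0
      rw [sub_eq_zero] at this
      exact this
    exact sub_eq_zero.mp (sylvester_inj A1 A2 hA1 hA2 _ heq)
  obtain ⟨T, hT⟩ := (LinearMap.injective_iff_surjective).mp hinj A3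
  have hT' : T * A1 - A2 * T = A3 := hT
  have hTA : T * A1 = A2 * T + A3 := by rw [← hT']; abel
  have hM : D1 + D2 * T = 0 := by
    apply keyA A1 (D1 + D2 * T) hA1
    intro x0
    set x1 : ℕ → Fin n1 → ℝ := fun t => (A1 ^ t).mulVec x0 with hx1
    set x2 : ℕ → Fin n2 → ℝ := fun t => T.mulVec (x1 t) with hx2
    have h1 : ∀ t, x1 (t + 1) = A1.mulVec (x1 t) := by
      intro t
      rw [hx1]
      simp only
      rw [pow_succ', ← mulVec_mulVec]
    have h2 : ∀ t, x2 (t + 1) = A2.mulVec (x2 t) + A3.mulVec (x1 t) := by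
      intro t
      rw [hx2]
      simp only
      rw [h1 t, mulVec_mulVec, hTA, Matrix.add_mulVec, ← mulVec_mulVec]
    have hten := hreg x1 x2 h1 h2
    refine hten.congr fun t => ?_
    simp only [hx2, hx1, mulVec_mulVec, Matrix.add_mulVec, Matrix.add_mul, Matrix.mul_assoc]
  refine ⟨T, ⟨hT', hM⟩, ?_⟩
  rintro T2 ⟨h1', _⟩
  apply hinj
  show T2 * A1 - A2 * T2 = T * A1 - A2 * T
  rw [h1', hT']
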